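/- Fix 0 < δ < 1 and an integer r ≥ 3. Let 𝔛 be a primitive coherent configuration of rank r on n vertices in which every nondiagonal constituent has degree at most δn. Then the motion of 𝔛 (the minimal degree of Aut(𝔛)) satisfies motion(𝔛) ≥ D_min(𝔛) ≥ min(δ, 1−δ)·n / (6(r−1)). -/

import Mathlib

open Finset

lemma greedy_subset {α : Type*} [DecidableEq α] (B : ℝ) (hB : 0 < B) (f : α → ℝ)
    (s : Finset α) (h0 : ∀ a ∈ s, 0 ≤ f a) (hlt : ∀ a ∈ s, f a < B)
    (htot : B ≤ ∑ a ∈ s, f a) :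
    ∃ t ⊆ s, B ≤ ∑ a ∈ t, f a ∧ ∑ a ∈ t, f a < 2 * B := by
  induction s using Finset.strongInduction with
  | _ s ih =>
    by_cases h : ∑ a ∈ s, f a < 2 * B
    · exact ⟨s, Finset.Subset.refl s, htot, h⟩
    · push_neg at h
      have hs : s.Nonempty := by
        rcases s.eq_empty_or_nonempty with he | hne
        · exfalso; rw [he] at h; simp at h; linarith
        · exact hne
      obtain ⟨a, ha⟩ := hs
      have hsum : ∑ x ∈ s.erase a, f x = (∑ x ∈ s, f x) - f a := by
        rw [← Finset.sum_erase_add s f ha]; ring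
      have htot' : B ≤ ∑ x ∈ s.erase a, f x := by
        rw [hsum]; have := hlt a ha; linarith
      obtain ⟨t, hts, h1, h2⟩ := ih (s.erase a) (Finset.erase_ssubset ha)
        (fun x hx => h0 x (Finset.mem_of_mem_erase hx))
        (fun x hx => hlt x (Finset.mem_of_mem_erase hx)) htot'
      exact ⟨t, hts.trans (Finset.erase_subset a s), h1, h2⟩

set_option maxHeartbeats 2000000 in
/-- Fix `0 < δ < 1` and `r ≥ 3`. If every nondiagonal constituent of a
primitive coherent configuration of rank `r` on `n` vertices has degree at most `δ n`,
then `D_min ≥ min(δ, 1-δ) n / (6 (r-1))`, and consequently every non-identity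
automorphism moves at least that many points (`motion ≥ D_min ≥ ...`). -/
theorem motion_of_bounded_degrees {V : Type*} [Fintype V] [DecidableEq V] {r : ℕ}
    (hr : 3 ≤ r) (δ : ℝ) (hδ0 : 0 < δ) (hδ1 : δ < 1)
    (d0 : Fin r) (c : V → V → Fin r)
    (hdiag : ∀ v : V, c v v = d0)
    (hoff : ∀ u v : V, u ≠ v → c u v ≠ d0)
    (hconf2 : ∀ i : Fin r, ∃ istar : Fin r, ∀ u v : V, c u v = i → c v u = istar)
    (p : Fin r → Fin r → Fin r → ℕ)
    (hcoh : ∀ (i j t : Fin r) (u v : V), c u v = t →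
      (Finset.univ.filter fun w => c u w = i ∧ c w v = j).card = p i j t)
    (k : Fin r → ℕ)
    (hk : ∀ (i : Fin r) (v : V), (Finset.univ.filter fun w => c v w = i).card = k i)
    -- primitivity: each nondiagonal constituent is strongly connected
    (hprim : ∀ i : Fin r, i ≠ d0 → ∀ u v : V, u ≠ v →
      ∃ (ℓ : ℕ) (q : ℕ → V), q 0 = u ∧ q ℓ = v ∧ ∀ t < ℓ, c (q t) (q (t + 1)) = i)
    (hdeg : ∀ i : Fin r, i ≠ d0 → (k i : ℝ) ≤ δ * (Fintype.card V : ℝ)) :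
    (∀ u v : V, u ≠ v →
      min δ (1 - δ) * (Fintype.card V : ℝ) / (6 * (r - 1 : ℝ)) ≤
        ((Finset.univ.filter fun x => c x u ≠ c x v).card : ℝ)) ∧
    (∀ σ : Equiv.Perm V, (∀ u v : V, c (σ u) (σ v) = c u v) → σ ≠ 1 →
      min δ (1 - δ) * (Fintype.card V : ℝ) / (6 * (r - 1 : ℝ)) ≤
        ((Finset.univ.filter fun x => σ x ≠ x).card : ℝ)) := by
  set n := Fintype.card V with hn
  set m := min δ (1 - δ) with hm
  have hm0 : 0 < m := lt_min hδ0 (by linarith)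
  have hmδ : m ≤ δ := min_le_left _ _
  have hm1δ : m ≤ 1 - δ := min_le_right _ _
  have hmhalf : m ≤ 1 / 2 := by
    rcases le_total δ (1/2) with h | h
    · linarith
    · linarith
  -- star function
  set star : Fin r → Fin r := fun i => (hconf2 i).choose with hstardef
  have hstar : ∀ (i : Fin r) (u v : V), c u v = i → c v u = star i :=
    fun i => (hconf2 i).choose_spec
  have hss : ∀ i : Fin r, (∃ a b : V, c a b = i) → ∀ u v : V, c u v = star i → c v u = i := by
    rintro i ⟨a, b, hab⟩ u v huv
    have h1 : c b a = star i := hstar i a b hab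
    have h2 : c a b = star (star i) := hstar (star i) b a h1
    have h3 : c v u = star (star i) := hstar (star i) u v huv
    rw [h3, ← h2, hab]
  -- colors with k i = 0 are unrealized
  have hk0 : ∀ i : Fin r, k i = 0 → ∀ u v : V, c u v ≠ i := by
    intro i hki u v huv
    have : v ∈ Finset.univ.filter fun w => c u w = i := by
      simp [huv]
    have h1 : 1 ≤ (Finset.univ.filter fun w => c u w = i).card :=
      Finset.card_pos.mpr ⟨v, this⟩
    rw [hk i u, hki] at h1
    omega
  -- pointwise flip
  have hflip : ∀ x u v : V, c x u = c x v ↔ c u x = c v x := by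
    intro x u v
    constructor
    · intro h
      have h1 : c u x = star (c x u) := hstar _ x u rfl
      have h2 : c v x = star (c x v) := hstar _ x v rfl
      rw [h1, h2, h]
    · intro h
      have h1 : c x u = star (c u x) := hstar _ u x rfl
      have h2 : c x v = star (c v x) := hstar _ v x rfl
      rw [h1, h2, h]
  -- D depends only on color
  have hE : ∀ u v : V, (Finset.univ.filter fun x => c x u = c x v).card
      = ∑ j : Fin r, (if k j = 0 then 0 else p j (star j) (c u v)) := by
    intro u v
    have e1 : (Finset.univ.filter fun x => c x u = c x v)
        = Finset.univ.filter fun x => c u x = c v x := by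
      apply Finset.filter_congr
      intro x _
      exact ⟨fun h => (hflip x u v).mp h, fun h => (hflip x u v).mpr h⟩
    rw [e1]
    rw [Finset.card_eq_sum_card_fiberwise (f := fun x => c u x) (t := Finset.univ)
      (fun x _ => Finset.mem_univ _)]
    apply Finset.sum_congr rfl
    intro j _
    rw [Finset.filter_filter]
    by_cases hkj : k j = 0
    · rw [if_pos hkj]
      rw [Finset.card_eq_zero]
      apply Finset.filter_eq_empty_iff.mpr
      intro x _
      rintro ⟨-, hx2⟩
      exact hk0 j hkj u x hx2
    · rw [if_neg hkj]
      have hreal : ∃ a b : V, c a b = j := by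
        have h1 : 0 < (Finset.univ.filter fun w => c u w = j).card := by
          rw [hk j u]; omega
        obtain ⟨w, hw⟩ := Finset.card_pos.mp h1
        simp only [Finset.mem_filter] at hw
        exact ⟨u, w, hw.2⟩
      have e2 : (Finset.univ.filter fun x => c u x = c v x ∧ c u x = j)
          = Finset.univ.filter fun x => c u x = j ∧ c x v = star j := by
        apply Finset.filter_congr
        intro x _
        constructor
        · rintro ⟨h1, h2⟩
          refine ⟨h2, ?_⟩
          have hvx : c v x = j := by rw [← h1, h2]
          exact hstar j v x hvx
        · rintro ⟨h1, h2⟩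
          have := hss j hreal x v h2
          exact ⟨by rw [h1, this], h1⟩
      rw [e2, hcoh j (star j) (c u v) u v rfl]
  have hDcolor : ∀ u v u' v' : V, c u v = c u' v' →
      (Finset.univ.filter fun x => c x u ≠ c x v).card
        = (Finset.univ.filter fun x => c x u' ≠ c x v').card := by
    intro u v u' v' hcc
    have p1 := Finset.card_filter_add_card_filter_not
      (s := (Finset.univ : Finset V)) (p := fun x => c x u = c x v)
    have p2 := Finset.card_filter_add_card_filter_not
      (s := (Finset.univ : Finset V)) (p := fun x => c x u' = c x v')
    have e1 := hE u v
    have e2 := hE u' v'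
    rw [hcc] at e1
    simp only [ne_eq] at p1 p2 ⊢
    omega
  -- in-degree equals k
  have hindeg : ∀ (i : Fin r) (z : V), (Finset.univ.filter fun x => c x z = i).card = k i := by
    intro i z
    by_cases hki : k i = 0
    · rw [hki, Finset.card_eq_zero]
      apply Finset.filter_eq_empty_iff.mpr
      intro x _ hx
      exact hk0 i hki x z hx
    · have hreal : ∃ a b : V, c a b = i := by
        have h1 : 0 < (Finset.univ.filter fun w => c z w = i).card := by
          rw [hk i z]; omega
        obtain ⟨w, hw⟩ := Finset.card_pos.mp h1
        simp only [Finset.mem_filter] at hw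
        exact ⟨z, w, hw.2⟩
      have hset : ∀ y : V, (Finset.univ.filter fun x => c x y = i)
          = Finset.univ.filter fun x => c y x = star i := by
        intro y
        apply Finset.filter_congr
        intro x _
        exact ⟨fun h => hstar i x y h, fun h => hss i hreal y x h⟩
      have hks : k (star i) = k i := by
        have hswap : ∑ y : V, (Finset.univ.filter fun x => c x y = i).card
            = ∑ x : V, (Finset.univ.filter fun y => c x y = i).card := by
          simp only [Finset.card_filter]
          exact Finset.sum_comm
        have hl : ∑ y : V, (Finset.univ.filter fun x => c x y = i).card = n * k (star i) := by
          rw [Finset.sum_congr rfl (fun y _ => by rw [hset y, hk (star i) y])]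
          simp [hn, mul_comm]
        have hrr : ∑ x : V, (Finset.univ.filter fun y => c x y = i).card = n * k i := by
          rw [Finset.sum_congr rfl (fun x _ => hk i x)]
          simp [hn, mul_comm]
        have hnpos : 0 < n := Fintype.card_pos_iff.mpr ⟨z⟩
        rw [hl, hrr] at hswap
        exact Nat.eq_of_mul_eq_mul_left hnpos hswap
      rw [hset z, hk (star i) z, hks]
  -- D ≥ 2 for distinct pairs
  have hDge2 : ∀ u v : V, u ≠ v → 2 ≤ (Finset.univ.filter fun x => c x u ≠ c x v).card := by
    intro u v huv
    have hsub : ({u, v} : Finset V) ⊆ Finset.univ.filter fun x => c x u ≠ c x v := by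
      intro x hx
      simp only [Finset.mem_insert, Finset.mem_singleton] at hx
      rcases hx with rfl | rfl
      · simp only [Finset.mem_filter, Finset.mem_univ, true_and]
        rw [hdiag x]; exact fun h => hoff x v huv h.symm
      · simp only [Finset.mem_filter, Finset.mem_univ, true_and]
        rw [hdiag x]; exact fun h => hoff x u (Ne.symm huv) h
    calc 2 = ({u, v} : Finset V).card := by rw [Finset.card_insert_of_notMem (by simpa using huv), Finset.card_singleton]
    _ ≤ _ := Finset.card_le_card hsub
  -- main part 1
  have H1 : ∀ u v : V, u ≠ v →
      m * (n : ℝ) / (6 * (r - 1 : ℝ)) ≤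
        ((Finset.univ.filter fun x => c x u ≠ c x v).card : ℝ) := by
    intro u v huv
    have hn2 : 2 ≤ n := Fintype.one_lt_card_iff_nontrivial.mpr ⟨u, v, huv⟩
    have hnposR : (0:ℝ) < (n:ℝ) := by
      have : 0 < n := by omega
      exact_mod_cast this
    have hnR2 : (2:ℝ) ≤ (n:ℝ) := by exact_mod_cast hn2
    have hr1 : (2:ℝ) ≤ (r:ℝ) - 1 := by
      have : (3:ℝ) ≤ (r:ℝ) := by exact_mod_cast hr
      linarith
    by_cases hsmall : m * (n:ℝ) ≤ 24
    · have hb : m * (n:ℝ) / (6 * ((r:ℝ) - 1)) ≤ 2 := by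
        rw [div_le_iff₀ (by linarith)]
        nlinarith
      have h2 := hDge2 u v huv
      have h2R : (2:ℝ) ≤ ((Finset.univ.filter fun x => c x u ≠ c x v).card : ℝ) := by
        exact_mod_cast h2
      linarith
    push_neg at hsmall
    -- total degree count
    have htot : ∑ j : Fin r, k j = n := by
      have h := Finset.card_eq_sum_card_fiberwise (f := fun w => c u w)
        (s := (Finset.univ : Finset V)) (t := (Finset.univ : Finset (Fin r)))
        (fun x _ => Finset.mem_univ _)
      rw [Finset.card_univ] at h
      rw [hn, h]
      exact Finset.sum_congr rfl fun j _ => (hk j u).symm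
    have hkd0 : k d0 = 1 := by
      have hset : (Finset.univ.filter fun w => c u w = d0) = {u} := by
        ext w
        simp only [Finset.mem_filter, Finset.mem_univ, true_and, Finset.mem_singleton]
        constructor
        · intro h
          by_contra hne
          exact hoff u w (fun e => hne e.symm) h
        · intro h
          rw [h]
          exact hdiag u
      rw [← hk d0 u, hset, Finset.card_singleton]
    have hND : (∑ j ∈ Finset.univ.erase d0, k j) + 1 = n := by
      have h := Finset.sum_erase_add Finset.univ k (Finset.mem_univ d0)
      rw [hkd0] at h
      omega
    -- choose the color set I
    obtain ⟨I, hIsub, hS1, hS2⟩ : ∃ I ⊆ Finset.univ.erase d0,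
        m * (n:ℝ) / 2 ≤ ((∑ i ∈ I, k i : ℕ) : ℝ) ∧ ((∑ i ∈ I, k i : ℕ) : ℝ) ≤ (n:ℝ) / 2 := by
      by_cases hA : ∃ j ∈ Finset.univ.erase d0, m * (n:ℝ) / 2 ≤ (k j : ℝ) ∧ (k j : ℝ) ≤ (n:ℝ) / 2
      · obtain ⟨j, hj, h1, h2⟩ := hA
        refine ⟨{j}, by simpa using hj, ?_, ?_⟩
        · simpa using h1
        · simpa using h2
      · push_neg at hA
        by_cases hB : ∃ j ∈ Finset.univ.erase d0, (n:ℝ) / 2 < (k j : ℝ)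
        · obtain ⟨j, hjND, hj⟩ := hB
          refine ⟨(Finset.univ.erase d0).erase j, Finset.erase_subset _ _, ?_, ?_⟩
          · have h := Finset.sum_erase_add (Finset.univ.erase d0) k hjND
            have hcast : ((∑ i ∈ (Finset.univ.erase d0).erase j, k i : ℕ) : ℝ)
                = (n:ℝ) - 1 - (k j : ℝ) := by
              have hnat : (∑ i ∈ (Finset.univ.erase d0).erase j, k i) + k j + 1 = n := by
                omega
              have hcR := congrArg (Nat.cast : ℕ → ℝ) hnat
              push_cast at hcR ⊢
              linarith
            have hkj : (k j : ℝ) ≤ δ * (n:ℝ) := by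
              have hjd0 : j ≠ d0 := (Finset.mem_erase.mp hjND).1
              exact hdeg j hjd0
            rw [hcast]
            -- (1-δ)n - 1 ≥ m n - 1 ≥ m n / 2 since m n > 24
            nlinarith
          · have h := Finset.sum_erase_add (Finset.univ.erase d0) k hjND
            have hcast : ((∑ i ∈ (Finset.univ.erase d0).erase j, k i : ℕ) : ℝ)
                = (n:ℝ) - 1 - (k j : ℝ) := by
              have hnat : (∑ i ∈ (Finset.univ.erase d0).erase j, k i) + k j + 1 = n := by
                omega
              have hcR := congrArg (Nat.cast : ℕ → ℝ) hnat
              push_cast at hcR ⊢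
              linarith
            rw [hcast]
            linarith
        · push_neg at hB
          have hlt : ∀ j ∈ Finset.univ.erase d0, (k j : ℝ) < m * (n:ℝ) / 2 := by
            intro j hj
            by_contra hge
            push_neg at hge
            exact absurd (hB j hj) (not_le.mpr (hA j hj hge))
          have htotR : m * (n:ℝ) / 2 ≤ ∑ j ∈ Finset.univ.erase d0, (k j : ℝ) := by
            have hcR := congrArg (Nat.cast : ℕ → ℝ) hND
            push_cast at hcR
            nlinarith
          obtain ⟨t, hts, h1, h2⟩ := greedy_subset (m * (n:ℝ) / 2) (by positivity)
            (fun i => (k i : ℝ)) (Finset.univ.erase d0)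
            (fun a _ => Nat.cast_nonneg _) hlt htotR
          refine ⟨t, hts, ?_, ?_⟩
          · rw [Nat.cast_sum]; exact h1
          · rw [Nat.cast_sum]
            -- sum < 2 * (m n / 2) = m n ≤ n/2
            nlinarith
    obtain ⟨S, hSdef⟩ : ∃ S : ℕ, S = ∑ i ∈ I, k i := ⟨_, rfl⟩
    rw [← hSdef] at hS1 hS2
    have hS0 : (0:ℝ) ≤ (S:ℝ) := Nat.cast_nonneg _
    have hSposR : (0:ℝ) < (S:ℝ) := by nlinarith
    have hSpos : 0 < S := by exact_mod_cast hSposR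
    -- neighborhood counts
    have hNcard : ∀ w : V, (Finset.univ.filter fun z => c w z ∈ I).card = S := by
      intro w
      rw [hSdef]
      rw [Finset.card_eq_sum_card_fiberwise (s := Finset.univ.filter fun z => c w z ∈ I) (f := fun z => c w z) (t := I)
        (fun z hz => (Finset.mem_filter.mp hz).2)]
      refine Finset.sum_congr rfl fun i hi => ?_
      rw [Finset.filter_filter]
      rw [show (Finset.univ.filter fun z => c w z ∈ I ∧ c w z = i)
          = Finset.univ.filter fun z => c w z = i from by
        apply Finset.filter_congr
        intro z _
        exact ⟨fun h => h.2, fun h => ⟨h ▸ hi, h⟩⟩]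
      exact hk i w
    have hIncard : ∀ z : V, (Finset.univ.filter fun x => c x z ∈ I).card = S := by
      intro z
      rw [hSdef]
      rw [Finset.card_eq_sum_card_fiberwise (s := Finset.univ.filter fun x => c x z ∈ I) (f := fun x => c x z) (t := I)
        (fun x hx => (Finset.mem_filter.mp hx).2)]
      refine Finset.sum_congr rfl fun i hi => ?_
      rw [Finset.filter_filter]
      rw [show (Finset.univ.filter fun x => c x z ∈ I ∧ c x z = i)
          = Finset.univ.filter fun x => c x z = i from by
        apply Finset.filter_congr
        intro x _
        exact ⟨fun h => h.2, fun h => ⟨h ▸ hi, h⟩⟩]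
      exact hindeg i z
    obtain ⟨Nu, hNu⟩ : ∃ N : Finset V, N = (Finset.univ.filter fun z => c u z ∈ I) :=
      ⟨_, rfl⟩
    have hdouble : ∑ w : V, (Nu ∩ (Finset.univ.filter fun z => c w z ∈ I)).card = S * S := by
      have e1 : ∀ w : V, Nu ∩ (Finset.univ.filter fun z => c w z ∈ I)
          = Nu.filter fun z => c w z ∈ I := by
        intro w
        rw [hNu]
        ext z
        simp only [Finset.mem_inter, Finset.mem_filter, Finset.mem_univ, true_and]
      calc ∑ w : V, (Nu ∩ (Finset.univ.filter fun z => c w z ∈ I)).card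
          = ∑ w : V, ∑ z ∈ Nu, (if c w z ∈ I then 1 else 0) := by
            refine Finset.sum_congr rfl fun w _ => ?_
            rw [e1 w, Finset.card_filter]
        _ = ∑ z ∈ Nu, ∑ w : V, (if c w z ∈ I then 1 else 0) := Finset.sum_comm
        _ = ∑ z ∈ Nu, S := by
            refine Finset.sum_congr rfl fun z _ => ?_
            rw [← Finset.card_filter]
            exact hIncard z
        _ = S * S := by
            rw [Finset.sum_const, smul_eq_mul, hNu, hNcard u]
    have hv0ex : ∃ v₀ : V,
        n * ((Nu ∩ (Finset.univ.filter fun z => c v₀ z ∈ I)).card) ≤ S * S := by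
      by_contra hcon
      push_neg at hcon
      have h2 : n * (S * S + 1) ≤ ∑ w : V,
          n * ((Nu ∩ (Finset.univ.filter fun z => c w z ∈ I)).card) := by
        calc n * (S * S + 1) = ∑ _w : V, (S * S + 1) := by
              rw [Finset.sum_const, Finset.card_univ, ← hn, smul_eq_mul]
          _ ≤ _ := Finset.sum_le_sum (fun w _ => hcon w)
      rw [← Finset.mul_sum, hdouble] at h2
      have hlt : n * (S * S) < n * (S * S + 1) :=
        mul_lt_mul_of_pos_left (Nat.lt_succ_self (S * S)) (show 0 < n by omega)
      exact absurd (lt_of_lt_of_le hlt h2) (lt_irrefl _)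
    obtain ⟨v₀, hv₀⟩ := hv0ex
    have hune : u ≠ v₀ := by
      intro heq
      rw [← heq, ← hNu, Finset.inter_self] at hv₀
      rw [hNu, hNcard u] at hv₀
      have hle : n ≤ S := Nat.le_of_mul_le_mul_right (by
        calc n * S ≤ S * S := hv₀) hSpos
      have : (n:ℝ) ≤ (S:ℝ) := by exact_mod_cast hle
      linarith
    -- the special pair has large distinguishing number
    have hDlarge : m * (n:ℝ) / 4 ≤
        ((Finset.univ.filter fun x => c x u ≠ c x v₀).card : ℝ) := by
      obtain ⟨t0, ht0⟩ : ∃ t : Finset V, t = (Finset.univ.filter fun z => c v₀ z ∈ I) :=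
        ⟨_, rfl⟩
      rw [← ht0] at hv₀
      have hsub : Nu \ t0 ⊆ Finset.univ.filter fun x => c x u ≠ c x v₀ := by
        intro z hz
        rw [Finset.mem_sdiff] at hz
        simp only [hNu, ht0, Finset.mem_filter, Finset.mem_univ, true_and] at hz ⊢
        intro heq
        exact hz.2 (((hflip z u v₀).mp heq) ▸ hz.1)
      have hc1 : (Nu ∩ t0).card + (Nu \ t0).card = S := by
        rw [Finset.card_inter_add_card_sdiff, hNu, hNcard u]
      have hDge : (Nu \ t0).card ≤ (Finset.univ.filter fun x => c x u ≠ c x v₀).card :=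
        Finset.card_le_card hsub
      have hAR : (n:ℝ) * (((Nu ∩ t0).card : ℕ) : ℝ) ≤ (S:ℝ) * (S:ℝ) := by
        exact_mod_cast hv₀
      have hc1R : (((Nu ∩ t0).card : ℕ) : ℝ) + (((Nu \ t0).card : ℕ) : ℝ) = (S:ℝ) := by
        exact_mod_cast hc1
      have hDgeR : (((Nu \ t0).card : ℕ) : ℝ) ≤
          ((Finset.univ.filter fun x => c x u ≠ c x v₀).card : ℝ) := by
        exact_mod_cast hDge
      have hAle : (((Nu ∩ t0).card : ℕ) : ℝ) ≤ (S:ℝ) / 2 := by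
        have h1 : (S:ℝ) * (S:ℝ) ≤ (S:ℝ) * ((n:ℝ)/2) := mul_le_mul_of_nonneg_left hS2 hS0
        have h2 : (n:ℝ) * (((Nu ∩ t0).card : ℕ) : ℝ) ≤ (n:ℝ) * ((S:ℝ)/2) := by
          calc (n:ℝ) * (((Nu ∩ t0).card : ℕ) : ℝ) ≤ (S:ℝ) * (S:ℝ) := hAR
            _ ≤ (S:ℝ) * ((n:ℝ)/2) := h1
            _ = (n:ℝ) * ((S:ℝ)/2) := by ring
        exact le_of_mul_le_mul_left h2 hnposR
      linarith
    -- transfer to the arbitrary pair (u, v) using paths of length ≤ r-1 in color c u v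
    obtain ⟨i, hidef⟩ : ∃ i : Fin r, i = c u v := ⟨_, rfl⟩
    have hid0 : i ≠ d0 := hidef ▸ hoff u v huv
    obtain ⟨Bf, hBf⟩ : ∃ B : ℕ → Finset V, B = fun d =>
        (fun s => s ∪ Finset.univ.filter (fun w => ∃ x ∈ s, c x w = i))^[d]
          ({u} : Finset V) := ⟨_, rfl⟩
    have hB0 : Bf 0 = {u} := by rw [hBf]; rfl
    have hBsucc : ∀ d, Bf (d + 1)
        = Bf d ∪ Finset.univ.filter (fun w => ∃ x ∈ Bf d, c x w = i) := by
      intro d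
      simp only [hBf, Function.iterate_succ_apply']
    have hBmono : ∀ d, Bf d ⊆ Bf (d + 1) := by
      intro d
      rw [hBsucc d]
      exact Finset.subset_union_left
    have hBmono' : ∀ a b, a ≤ b → Bf a ⊆ Bf b := by
      intro a b hab
      induction b with
      | zero => rw [Nat.le_zero.mp hab]
      | succ b ih =>
        rcases Nat.lt_or_ge a (b + 1) with h | h
        · exact (ih (by omega)).trans (hBmono b)
        · rw [Nat.le_antisymm hab h]
    have hBwd : ∀ d, ∀ w w' : V, c u w = c u w' → w' ∈ Bf d → w ∈ Bf d := by
      intro d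
      induction d with
      | zero =>
        intro w w' hcc hw'
        rw [hB0, Finset.mem_singleton] at hw' ⊢
        rw [hw', hdiag] at hcc
        by_contra hne
        exact hoff u w (fun e => hne e.symm) hcc
      | succ d ih =>
        intro w w' hcc hw'
        rw [hBsucc d, Finset.mem_union] at hw' ⊢
        rcases hw' with hw' | hw'
        · exact Or.inl (ih w w' hcc hw')
        · simp only [Finset.mem_filter, Finset.mem_univ, true_and] at hw'
          obtain ⟨x', hx'B, hx'c⟩ := hw'
          have hp1 : 1 ≤ p (c u x') i (c u w') := by
            rw [← hcoh (c u x') i (c u w') u w' rfl]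
            exact Finset.card_pos.mpr
              ⟨x', Finset.mem_filter.mpr ⟨Finset.mem_univ _, rfl, hx'c⟩⟩
          have h2 := hcoh (c u x') i (c u w') u w hcc
          have hpos : 0 < (Finset.univ.filter fun x => c u x = c u x' ∧ c x w = i).card := by
            rw [h2]; omega
          obtain ⟨x, hx⟩ := Finset.card_pos.mp hpos
          simp only [Finset.mem_filter, Finset.mem_univ, true_and] at hx
          refine Or.inr ?_
          simp only [Finset.mem_filter, Finset.mem_univ, true_and]
          exact ⟨x, ih x x' hx.1 hx'B, hx.2⟩
    have hgrow : ∀ d, Bf d ≠ Bf (d + 1) →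
        (Bf d).image (c u) ⊂ (Bf (d + 1)).image (c u) := by
      intro d hne
      have hsub := Finset.image_subset_image (f := c u) (hBmono d)
      rw [Finset.ssubset_iff_of_subset hsub]
      obtain ⟨w, hwB, hwnB⟩ := Finset.exists_of_ssubset (lt_of_le_of_ne (hBmono d) hne)
      refine ⟨c u w, Finset.mem_image_of_mem _ hwB, ?_⟩
      intro hmem
      obtain ⟨w', hw'B, hw'c⟩ := Finset.mem_image.mp hmem
      exact hwnB (hBwd d w w' hw'c.symm hw'B)
    have hcardgrow : ∀ d, (∀ e < d, Bf e ≠ Bf (e + 1)) →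
        d + 1 ≤ ((Bf d).image (c u)).card := by
      intro d
      induction d with
      | zero =>
        intro _
        refine Finset.card_pos.mpr ⟨c u u, Finset.mem_image_of_mem _ ?_⟩
        rw [hB0]; exact Finset.mem_singleton_self u
      | succ d ih =>
        intro h
        have h1 := ih (fun e he => h e (by omega))
        have h2 := Finset.card_lt_card (hgrow d (h d (by omega)))
        omega
    have hstabex : ∃ e < r, Bf e = Bf (e + 1) := by
      by_contra hcon
      push_neg at hcon
      have h1 := hcardgrow r hcon
      have h2 : ((Bf r).image (c u)).card ≤ r := by
        calc ((Bf r).image (c u)).card ≤ (Finset.univ : Finset (Fin r)).card :=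
              Finset.card_le_card (Finset.subset_univ _)
          _ = r := by rw [Finset.card_univ, Fintype.card_fin]
      omega
    obtain ⟨e, her, hstab⟩ := hstabex
    have hconst : ∀ d, Bf (e + d) = Bf e := by
      intro d
      induction d with
      | zero => rfl
      | succ d ih =>
        have : e + (d + 1) = (e + d) + 1 := by omega
        rw [this, hBsucc (e + d), ih, ← hBsucc e, ← hstab]
    have hv0mem : v₀ ∈ Bf e := by
      obtain ⟨ℓ₀, q, hq0, hqℓ, hqc⟩ := hprim i hid0 u v₀ hune
      have hqmem : ∀ t, t ≤ ℓ₀ → q t ∈ Bf t := by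
        intro t
        induction t with
        | zero => intro _; rw [hq0, hB0]; exact Finset.mem_singleton_self u
        | succ t ih =>
          intro ht
          have h1 := ih (by omega)
          rw [hBsucc t, Finset.mem_union]
          refine Or.inr ?_
          simp only [Finset.mem_filter, Finset.mem_univ, true_and]
          exact ⟨q t, h1, hqc t (by omega)⟩
      have hv0ℓ : v₀ ∈ Bf ℓ₀ := hqℓ ▸ hqmem ℓ₀ (le_refl _)
      rcases le_or_gt ℓ₀ e with h | h
      · exact hBmono' ℓ₀ e h hv0ℓ
      · have : ℓ₀ = e + (ℓ₀ - e) := by omega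
        rw [this, hconst] at hv0ℓ
        exact hv0ℓ
    have hpath : ∀ d, ∀ w ∈ Bf d, ∃ ℓ ≤ d, ∃ q : ℕ → V,
        q 0 = u ∧ q ℓ = w ∧ ∀ t < ℓ, c (q t) (q (t + 1)) = i := by
      intro d
      induction d with
      | zero =>
        intro w hw
        rw [hB0, Finset.mem_singleton] at hw
        exact ⟨0, le_refl 0, fun _ => u, rfl, hw ▸ rfl, fun t ht => absurd ht (by omega)⟩
      | succ d ih =>
        intro w hw
        rw [hBsucc d, Finset.mem_union] at hw
        rcases hw with hw | hw
        · obtain ⟨ℓ, hℓ, q, h0, hℓw, hc⟩ := ih w hw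
          exact ⟨ℓ, by omega, q, h0, hℓw, hc⟩
        · simp only [Finset.mem_filter, Finset.mem_univ, true_and] at hw
          obtain ⟨x, hxB, hxc⟩ := hw
          obtain ⟨ℓ, hℓ, q, h0, hℓx, hc⟩ := ih x hxB
          refine ⟨ℓ + 1, by omega, fun t => if t ≤ ℓ then q t else w, ?_, ?_, ?_⟩
          · simp only [if_pos (Nat.zero_le ℓ)]; exact h0
          · simp only [if_neg (by omega : ¬ ℓ + 1 ≤ ℓ)]
          · intro t ht
            show c (if t ≤ ℓ then q t else w) (if t + 1 ≤ ℓ then q (t + 1) else w) = i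
            rcases Nat.lt_or_ge t ℓ with h | h
            · rw [if_pos (by omega : t ≤ ℓ), if_pos (by omega : t + 1 ≤ ℓ)]
              exact hc t h
            · have hteq : t = ℓ := by omega
              subst hteq
              rw [if_pos (le_refl t), if_neg (by omega : ¬ t + 1 ≤ t), hℓx]
              exact hxc
    have htel : ∀ (q : ℕ → V) (ℓ : ℕ), (∀ t < ℓ, c (q t) (q (t + 1)) = i) →
        (Finset.univ.filter fun x => c x (q 0) ≠ c x (q ℓ)).card
          ≤ ℓ * (Finset.univ.filter fun x => c x u ≠ c x v).card := by
      intro q ℓ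
      induction ℓ with
      | zero =>
        intro _
        simp
      | succ ℓ ih =>
        intro hc
        have h1 := ih (fun t ht => hc t (by omega))
        have hsub : (Finset.univ.filter fun x => c x (q 0) ≠ c x (q (ℓ + 1)))
            ⊆ (Finset.univ.filter fun x => c x (q 0) ≠ c x (q ℓ))
              ∪ (Finset.univ.filter fun x => c x (q ℓ) ≠ c x (q (ℓ + 1))) := by
          intro x hx
          simp only [Finset.mem_filter, Finset.mem_univ, true_and, Finset.mem_union] at hx ⊢
          by_contra hcon
          push_neg at hcon
          exact hx (hcon.1.trans hcon.2)
        have hlast : (Finset.univ.filter fun x => c x (q ℓ) ≠ c x (q (ℓ + 1))).card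
            = (Finset.univ.filter fun x => c x u ≠ c x v).card := by
          apply hDcolor
          rw [hc ℓ (by omega)]
          exact hidef
        calc (Finset.univ.filter fun x => c x (q 0) ≠ c x (q (ℓ + 1))).card
            ≤ ((Finset.univ.filter fun x => c x (q 0) ≠ c x (q ℓ))
              ∪ (Finset.univ.filter fun x => c x (q ℓ) ≠ c x (q (ℓ + 1)))).card :=
              Finset.card_le_card hsub
          _ ≤ (Finset.univ.filter fun x => c x (q 0) ≠ c x (q ℓ)).card
              + (Finset.univ.filter fun x => c x (q ℓ) ≠ c x (q (ℓ + 1))).card :=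
              Finset.card_union_le _ _
          _ ≤ ℓ * (Finset.univ.filter fun x => c x u ≠ c x v).card
              + (Finset.univ.filter fun x => c x u ≠ c x v).card := by
              rw [hlast]; omega
          _ = (ℓ + 1) * (Finset.univ.filter fun x => c x u ≠ c x v).card := by ring
    obtain ⟨ℓ, hℓe, q, hq0, hqℓ, hqc⟩ := hpath e v₀ hv0mem
    have htrans : (Finset.univ.filter fun x => c x u ≠ c x v₀).card
        ≤ (r - 1) * (Finset.univ.filter fun x => c x u ≠ c x v).card := by
      have h1 := htel q ℓ hqc
      rw [hq0, hqℓ] at h1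
      calc (Finset.univ.filter fun x => c x u ≠ c x v₀).card
          ≤ ℓ * (Finset.univ.filter fun x => c x u ≠ c x v).card := h1
        _ ≤ (r - 1) * (Finset.univ.filter fun x => c x u ≠ c x v).card :=
            Nat.mul_le_mul_right _ (by omega)
    have htransR : ((Finset.univ.filter fun x => c x u ≠ c x v₀).card : ℝ)
        ≤ ((r:ℝ) - 1) * ((Finset.univ.filter fun x => c x u ≠ c x v).card : ℝ) := by
      have hc1 : (((r - 1 : ℕ) : ℝ)) = (r:ℝ) - 1 := by
        have : 1 ≤ r := by omega
        push_cast [Nat.cast_sub this]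
        ring
      calc ((Finset.univ.filter fun x => c x u ≠ c x v₀).card : ℝ)
          ≤ (((r - 1) * (Finset.univ.filter fun x => c x u ≠ c x v).card : ℕ) : ℝ) := by
            exact_mod_cast htrans
        _ = ((r:ℝ) - 1) * ((Finset.univ.filter fun x => c x u ≠ c x v).card : ℝ) := by
            push_cast [hc1]
            ring
    have hDnn : (0:ℝ) ≤ ((Finset.univ.filter fun x => c x u ≠ c x v).card : ℝ) :=
      Nat.cast_nonneg _
    rw [div_le_iff₀ (by linarith)]
    nlinarith
  refine ⟨H1, ?_⟩
  intro σ hσ hσ1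
  obtain ⟨u, hu⟩ : ∃ u : V, σ u ≠ u := by
    by_contra h
    push_neg at h
    exact hσ1 (Equiv.ext fun x => h x)
  have hsub : (Finset.univ.filter fun x => c x u ≠ c x (σ u)) ⊆
      Finset.univ.filter fun x => σ x ≠ x := by
    intro x hx
    simp only [Finset.mem_filter, Finset.mem_univ, true_and] at hx ⊢
    intro hfix
    apply hx
    rw [← hσ x u, hfix]
  have := H1 u (σ u) (Ne.symm hu)
  calc m * (n : ℝ) / (6 * (r - 1 : ℝ))
      ≤ ((Finset.univ.filter fun x => c x u ≠ c x (σ u)).card : ℝ) := this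
    _ ≤ _ := by exact_mod_cast Nat.cast_le.mpr (Finset.card_le_card hsub)
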